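/- Let C be a polygonal curve with vertices p_0, …, p_m and L(C) > 0. Then there exists k ∈ {0, …, m−1} such that two consecutive vertices of the arclength respacing lie on the same segment of C and hence ‖f(p_{k+1}) − f(p_k)‖ = L(C)/m. -/

import Mathlib

open Finset Filter

noncomputable section

/-- The length of the polygonal curve with vertices `p 0, …, p m`
(also the arclength distance from `p 0` to `p m` along the curve). -/
def polyLength {dim : ℕ} (p : ℕ → EuclideanSpace ℝ (Fin dim)) (m : ℕ) : ℝ :=
  ∑ i ∈ Finset.range m, ‖p (i + 1) - p i‖

/-- `P` is the arclength-parameterized linear interpolation of the polygonal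
curve with vertices `p 0, …, p m`:
`P ((1-t)·d_{k-1} + t·d_k) = (1-t)·p_{k-1} + t·p_k` for `t ∈ [0,1]`, `k = 1, …, m`,
where `d_k = polyLength p k` is the arclength up to vertex `k`. -/
def IsArcParam {dim : ℕ} (p : ℕ → EuclideanSpace ℝ (Fin dim)) (m : ℕ)
    (P : ℝ → EuclideanSpace ℝ (Fin dim)) : Prop :=
  ∀ k : ℕ, 1 ≤ k → k ≤ m → ∀ t : ℝ, 0 ≤ t → t ≤ 1 →
    P ((1 - t) * polyLength p (k - 1) + t * polyLength p k)
      = (1 - t) • p (k - 1) + t • p k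

/-- The polygonal curve with vertices `p 0, …, p m` is equilateral:
all consecutive interpoint distances agree. -/
def IsEquilateral {dim : ℕ} (p : ℕ → EuclideanSpace ℝ (Fin dim)) (m : ℕ) : Prop :=
  ∀ k l : ℕ, 1 ≤ k → k ≤ m → 1 ≤ l → l ≤ m →
    ‖p k - p (k - 1)‖ = ‖p l - p (l - 1)‖

/-- `q 0, …, q m` are the vertices of the arclength respacing `f(C)` of the
polygonal curve `C` with vertices `p 0, …, p m`:
`q k = P (k·L(C)/m)` where `P` is the arclength parameterization of `C`;
by convention `f(C) := C` when `L(C) = 0`. -/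
def Respaces {dim : ℕ} (m : ℕ) (p q : ℕ → EuclideanSpace ℝ (Fin dim)) : Prop :=
  (polyLength p m = 0 ∧ ∀ k ≤ m, q k = p k) ∨
  (0 < polyLength p m ∧ ∃ P : ℝ → EuclideanSpace ℝ (Fin dim), IsArcParam p m P ∧
    ∀ k ≤ m, q k = P ((k : ℝ) * polyLength p m / m))

lemma polyLength_nonneg {dim : ℕ} (p : ℕ → EuclideanSpace ℝ (Fin dim)) (m : ℕ) :
    0 ≤ polyLength p m :=
  Finset.sum_nonneg fun _ _ => norm_nonneg _

lemma polyLength_mono {dim : ℕ} (p : ℕ → EuclideanSpace ℝ (Fin dim)) {a b : ℕ}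
    (h : a ≤ b) : polyLength p a ≤ polyLength p b :=
  Finset.sum_le_sum_of_subset_of_nonneg (Finset.range_subset_range.2 h)
    (fun _ _ _ => norm_nonneg _)

lemma polyLength_succ {dim : ℕ} (p : ℕ → EuclideanSpace ℝ (Fin dim)) (j : ℕ) :
    polyLength p (j + 1) = polyLength p j + ‖p (j + 1) - p j‖ :=
  Finset.sum_range_succ _ _

/-- Pigeonhole: some interval `[k·L/m, (k+1)·L/m]` is contained in a single
arclength interval `[d_{j-1}, d_j]`. -/
lemma key_interval {dim m : ℕ} (hm : 1 ≤ m) (p : ℕ → EuclideanSpace ℝ (Fin dim))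
    (hL : 0 < polyLength p m) :
    ∃ k < m, ∃ j : ℕ, 1 ≤ j ∧ j ≤ m ∧
      polyLength p (j - 1) ≤ (k : ℝ) * polyLength p m / m ∧
      ((k : ℝ) + 1) * polyLength p m / m ≤ polyLength p j := by
  classical
  set L := polyLength p m with hLdef
  by_contra H
  push_neg at H
  have hm0 : (0 : ℝ) < (m : ℝ) := by exact_mod_cast hm
  set g : ℕ → ℕ := fun k => Nat.findGreatest (fun j => polyLength p j ≤ (k : ℝ) * L / m) m
    with hg
  have hP0 : ∀ k : ℕ, polyLength p 0 ≤ (k : ℝ) * L / m := by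
    intro k
    simp only [polyLength, Finset.range_zero, Finset.sum_empty]
    positivity
  have hgspec : ∀ k : ℕ, polyLength p (g k) ≤ (k : ℝ) * L / m := fun k =>
    Nat.findGreatest_spec (P := fun j => polyLength p j ≤ (k : ℝ) * L / m)
      (Nat.zero_le m) (hP0 k)
  -- g k + 1 < m for k < m
  have hglt : ∀ k < m, g k + 1 < m := by
    intro k hk
    have hgle : g k ≤ m := Nat.findGreatest_le m
    have hkL : (k : ℝ) * L / m < L := by
      rw [div_lt_iff₀ hm0]
      have : (k : ℝ) < m := by exact_mod_cast hk
      nlinarith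
    -- first show g k < m
    have h1 : g k < m := by
      rcases lt_or_eq_of_le hgle with h | h
      · exact h
      · exfalso; have := hgspec k; rw [h] at this; exact absurd this (not_le.2 hkL)
    -- use H to show d (g k + 1) < (k+1) L / m
    have hd1 : ¬ (polyLength p (g k + 1) ≤ (k : ℝ) * L / m) :=
      Nat.findGreatest_is_greatest (Nat.lt_succ_self _) h1
    have hj1 : 1 ≤ g k + 1 := Nat.succ_le_succ (Nat.zero_le _)
    have hjm : g k + 1 ≤ m := h1
    have hlt : polyLength p (g k + 1) < ((k : ℝ) + 1) * L / m :=
      H k hk (g k + 1) hj1 hjm (by simpa using hgspec k)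
    rcases lt_or_eq_of_le hjm with h2 | h2
    · exact h2
    · exfalso
      rw [h2] at hlt
      have hle : ((k : ℝ) + 1) * L / m ≤ L := by
        rw [div_le_iff₀ hm0]
        have : (k : ℝ) + 1 ≤ m := by exact_mod_cast hk
        nlinarith
      exact absurd (hlt.trans_le hle) (lt_irrefl L)
  -- g (k+1) ≥ g k + 1 for k < m
  have hstep : ∀ k < m, g k + 1 ≤ g (k + 1) := by
    intro k hk
    have h1 : g k + 1 < m := hglt k hk
    have hd1 : ¬ (polyLength p (g k + 1) ≤ (k : ℝ) * L / m) :=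
      Nat.findGreatest_is_greatest (Nat.lt_succ_self _) h1.le
    have hj1 : 1 ≤ g k + 1 := Nat.succ_le_succ (Nat.zero_le _)
    have hlt : polyLength p (g k + 1) < ((k : ℝ) + 1) * L / m :=
      H k hk (g k + 1) hj1 h1.le (by simpa using hgspec k)
    exact Nat.le_findGreatest h1.le (by push_cast; exact hlt.le)
  -- induction: k ≤ g k for k ≤ m
  have hind : ∀ k ≤ m, k ≤ g k := by
    intro k
    induction k with
    | zero => intro _; exact Nat.zero_le _
    | succ n ih =>
      intro hn
      have hnm : n < m := hn
      have := hstep n hnm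
      have := ih hnm.le
      omega
  have h1 := hind (m - 1) (Nat.sub_le m 1)
  have h2 := hglt (m - 1) (by omega)
  omega


/-- Some two consecutive vertices of the arclength respacing lie on the same
segment of `C`, hence are at distance exactly `L(C)/m`. -/
theorem stmt6 {dim m : ℕ} (hm : 1 ≤ m) (p : ℕ → EuclideanSpace ℝ (Fin dim))
    (hL : 0 < polyLength p m)
    (P : ℝ → EuclideanSpace ℝ (Fin dim)) (hP : IsArcParam p m P)
    (q : ℕ → EuclideanSpace ℝ (Fin dim))
    (hq : ∀ k ≤ m, q k = P ((k : ℝ) * polyLength p m / m)) :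
    ∃ k < m, ∃ j : ℕ, 1 ≤ j ∧ j ≤ m ∧
      q k ∈ segment ℝ (p (j - 1)) (p j) ∧
      q (k + 1) ∈ segment ℝ (p (j - 1)) (p j) ∧
      ‖q (k + 1) - q k‖ = polyLength p m / m := by
  classical
  obtain ⟨k, hk, j, hj1, hjm, ha, hb⟩ := key_interval hm p hL
  set L := polyLength p m with hLdef
  have hm0 : (0 : ℝ) < (m : ℝ) := by exact_mod_cast hm
  have hLm : 0 < L / m := div_pos hL hm0
  set a := polyLength p (j - 1) with hadef
  set b := polyLength p j with hbdef
  have hsub : j - 1 + 1 = j := Nat.succ_pred_eq_of_pos hj1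
  have hba : b - a = ‖p j - p (j - 1)‖ := by
    have h := polyLength_succ p (j - 1)
    rw [hsub] at h
    rw [hbdef, hadef, h]; ring
  have hstep : ((k : ℝ) + 1) * L / m = (k : ℝ) * L / m + L / m := by ring
  have hab : a + L / m ≤ b := by
    have : (k : ℝ) * L / m + L / m ≤ b := by rw [← hstep]; exact hb
    linarith
  have hℓpos : 0 < b - a := by linarith
  set t : ℝ := ((k : ℝ) * L / m - a) / (b - a) with htdef
  set t' : ℝ := (((k : ℝ) + 1) * L / m - a) / (b - a) with ht'def
  have ht0 : 0 ≤ t := div_nonneg (by linarith) hℓpos.le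
  have ht'0 : 0 ≤ t' := div_nonneg (by linarith) hℓpos.le
  have ht1 : t ≤ 1 := by
    rw [htdef, div_le_one hℓpos]
    linarith
  have ht'1 : t' ≤ 1 := by
    rw [ht'def, div_le_one hℓpos]
    linarith
  have heq1 : (1 - t) * a + t * b = (k : ℝ) * L / m := by
    rw [htdef]; field_simp; ring
  have heq2 : (1 - t') * a + t' * b = ((k : ℝ) + 1) * L / m := by
    rw [ht'def]; field_simp; ring
  have hqk : q k = (1 - t) • p (j - 1) + t • p j := by
    rw [hq k hk.le, ← heq1]
    exact hP j hj1 hjm t ht0 ht1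
  have hqk1 : q (k + 1) = (1 - t') • p (j - 1) + t' • p j := by
    rw [hq (k + 1) hk, show ((k + 1 : ℕ) : ℝ) = (k : ℝ) + 1 by push_cast; ring,
      ← heq2]
    exact hP j hj1 hjm t' ht'0 ht'1
  refine ⟨k, hk, j, hj1, hjm, ⟨1 - t, t, by linarith, ht0, by ring, hqk.symm⟩,
    ⟨1 - t', t', by linarith, ht'0, by ring, hqk1.symm⟩, ?_⟩
  have hdiff : q (k + 1) - q k = (t' - t) • (p j - p (j - 1)) := by
    rw [hqk, hqk1]
    module
  rw [hdiff, norm_smul, ← hba, Real.norm_eq_abs]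
  have htt : t' - t = (L / m) / (b - a) := by
    rw [htdef, ht'def, div_sub_div_same]
    congr 1
    ring
  rw [htt, abs_of_nonneg (by positivity)]
  field_simp
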